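/- Let U be a nonempty type and G a group. Then every subgroup of G is normal (i.e., G is a Dedekind group) if and only if every soft int-group on G over U is a normal soft int-group. -/

import Mathlib

/-- A soft int-group on a group `G` over universe `U`: a soft set `f : G → Set U`
such that `f x ∩ f y ⊆ f (x * y)` and `f x⁻¹ = f x` for all `x y : G`. -/
def IsSoftIntGroup {U G : Type*} [Group G] (f : G → Set U) : Prop :=
  (∀ x y : G, f x ∩ f y ⊆ f (x * y)) ∧ (∀ x : G, f x⁻¹ = f x)

/-- A normal soft int-group: a soft int-group with `f (x * y) = f (y * x)`. -/
def IsNormalSoftIntGroup {U G : Type*} [Group G] (f : G → Set U) : Prop :=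
  IsSoftIntGroup f ∧ ∀ x y : G, f (x * y) = f (y * x)

/-- Soft product of soft sets: `(f * g)(x) = ⋃ {f u ∩ g v : u * v = x}`. -/
def softProd {U G : Type*} [Group G] (f g : G → Set U) : G → Set U :=
  fun x => ⋃ (u : G) (v : G) (_ : u * v = x), f u ∩ g v

/-- Level set of a soft int-group containing some witness is a subgroup. -/
def levelSubgroup {U G : Type*} [Group G] (f : G → Set U) (hf : IsSoftIntGroup f)
    (t : U) (a : G) (ha : t ∈ f a) : Subgroup G where
  carrier := {x | t ∈ f x}
  mul_mem' := fun hx hy => hf.1 _ _ ⟨hx, hy⟩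
  one_mem' := by
    have : t ∈ f (a * a⁻¹) := hf.1 a a⁻¹ ⟨ha, (hf.2 a).symm ▸ ha⟩
    simpa using this
  inv_mem' := fun {x} hx => show t ∈ f x⁻¹ from (hf.2 x).symm ▸ hx

theorem stmt_7 {U G : Type*} [Nonempty U] [Group G] :
    (∀ H : Subgroup G, H.Normal) ↔
      (∀ f : G → Set U, IsSoftIntGroup f → IsNormalSoftIntGroup f) := by
  constructor
  · intro hded f hf
    refine ⟨hf, fun x y => ?_⟩
    have key : ∀ x y : G, f (x * y) ⊆ f (y * x) := by
      intro x y t ht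
      have := (hded (levelSubgroup f hf t (x * y) ht)).conj_mem (x * y) ht y
      exact (by simpa [mul_assoc] using this : y * x ∈ levelSubgroup f hf t (x * y) ht)
    exact Set.Subset.antisymm (key x y) (key y x)
  · intro hall H
    set f : G → Set U := fun x => {_t : U | x ∈ H} with hfdef
    have hmem : ∀ (t : U) (x : G), t ∈ f x ↔ x ∈ H := fun t x => Iff.rfl
    have hf : IsSoftIntGroup f := by
      constructor
      · intro x y t ⟨htx, hty⟩
        exact H.mul_mem htx hty
      · intro x
        ext t
        simp [hmem, inv_mem_iff]
    have hn := (hall f hf).2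
    constructor
    intro n hn' g
    obtain ⟨t⟩ := ‹Nonempty U›
    have heq := hn g (n * g⁻¹)
    have h2 : n * g⁻¹ * g ∈ H := by simpa using hn'
    have : t ∈ f (g * (n * g⁻¹)) := heq ▸ (hmem t _).mpr h2
    simpa [mul_assoc] using (hmem t _).mp this
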